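/- Let G be a factorizable, non-fixing group of homeomorphisms of a topological manifold M of positive dimension. Then for every x ∈ M and every open neighborhood U of x there exist f, h ∈ G, both supported in U, such that the commutator [f,h] = f h f⁻¹ h⁻¹ moves x, i.e. [f,h](x) ≠ x. -/

import Mathlib

open Set
open scoped commutatorElement

/-- `g` is supported in `U`: the closure of its non-fixed-point set lies in `U`. -/
def SupportedIn {M : Type*} [TopologicalSpace M] (g : Equiv.Perm M) (U : Set M) : Prop :=
  closure {y | g y ≠ y} ⊆ U

/-- `G` is factorizable: every element factors as a finite product of elements of `G`
each supported in a member of any given open cover. -/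
def IsFactorizable {M : Type*} [TopologicalSpace M] (G : Subgroup (Equiv.Perm M)) : Prop :=
  ∀ 𝒰 : Set (Set M), (∀ U ∈ 𝒰, IsOpen U) → ⋃₀ 𝒰 = univ → ∀ g ∈ G,
    ∃ l : List (Equiv.Perm M), (∀ f ∈ l, f ∈ G ∧ ∃ U ∈ 𝒰, SupportedIn f U) ∧ l.prod = g

lemma list_prod_fix {M : Type*} (l : List (Equiv.Perm M)) (x : M)
    (h : ∀ f ∈ l, f x = x) : l.prod x = x := by
  induction l with
  | nil => rfl
  | cons a l ih =>
    rw [List.prod_cons, Equiv.Perm.mul_apply,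
      ih (fun f hf => h f (List.mem_cons_of_mem a hf)), h a (List.mem_cons_self)]

lemma exists_supported_moving {M : Type*} [TopologicalSpace M] [T2Space M]
    (G : Subgroup (Equiv.Perm M)) (hfact : IsFactorizable G)
    (hnonfix : ∀ x : M, ∃ g ∈ G, g x ≠ x)
    (x : M) (W : Set M) (hW : IsOpen W) (hxW : x ∈ W) :
    ∃ g ∈ G, SupportedIn g W ∧ g x ≠ x := by
  obtain ⟨g₀, hg₀G, hg₀x⟩ := hnonfix x
  obtain ⟨l, hl, hprod⟩ := hfact {W, {x}ᶜ}
    (by rintro V (rfl | rfl)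
        · exact hW
        · exact isOpen_compl_singleton)
    (by
      apply eq_univ_of_forall
      intro y
      by_cases hy : y = x
      · exact ⟨W, Or.inl rfl, hy ▸ hxW⟩
      · exact ⟨{x}ᶜ, Or.inr rfl, hy⟩)
    g₀ hg₀G
  by_cases hall : ∀ f ∈ l, f x = x
  · exact absurd (hprod ▸ list_prod_fix l x hall) hg₀x
  · push_neg at hall
    obtain ⟨f, hfl, hfx⟩ := hall
    obtain ⟨hfG, V, hV, hsupp⟩ := hl f hfl
    rcases hV with rfl | rfl
    · exact ⟨f, hfG, hsupp, hfx⟩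
    · exact absurd (hsupp (subset_closure hfx)) (by simp)

/-- For a factorizable, non-fixing group of homeomorphisms of a topological manifold of
positive dimension, near every point and inside every open neighborhood of it there are
two elements of `G` supported in that neighborhood whose commutator moves the point. -/
theorem exists_commutator_moving (n : ℕ) (hn : 0 < n) {M : Type*} [TopologicalSpace M]
    [T2Space M] [ChartedSpace (EuclideanSpace ℝ (Fin n)) M]
    (G : Subgroup (Equiv.Perm M)) (hcont : ∀ g ∈ G, Continuous ⇑g)
    (hfact : IsFactorizable G) (hnonfix : ∀ x : M, ∃ g ∈ G, g x ≠ x)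
    (x : M) (U : Set M) (hU : IsOpen U) (hxU : x ∈ U) :
    ∃ f ∈ G, ∃ h ∈ G, SupportedIn f U ∧ SupportedIn h U ∧ ⁅f, h⁆ x ≠ x := by
  obtain ⟨f, hfG, hfsupp, hfx⟩ :=
    exists_supported_moving G hfact hnonfix x U hU hxU
  obtain ⟨u, v, hu, hv, hfxu, hxv, huv⟩ := t2_separation hfx
  set V : Set M := f ⁻¹' u ∩ v ∩ U with hVdef
  have hVopen : IsOpen V := (((hcont f hfG).isOpen_preimage u hu).inter hv).inter hU
  have hxV : x ∈ V := ⟨⟨hfxu, hxv⟩, hxU⟩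
  have hVU : V ⊆ U := inter_subset_right
  have hmove : ∀ y ∈ V, f y ∉ V := by
    rintro y ⟨⟨hyu, -⟩, -⟩ ⟨⟨-, hyv⟩, -⟩
    exact (huv.ne_of_mem hyu hyv) rfl
  obtain ⟨h, hhG, hhsupp, hhx⟩ :=
    exists_supported_moving G hfact hnonfix x V hVopen hxV
  refine ⟨f, hfG, h, hhG, hfsupp, hhsupp.trans hVU, ?_⟩
  have hmovedh : ∀ z, z ∉ V → h z = z := fun z hz => by
    by_contra hc
    exact hz (hhsupp (subset_closure hc))
  set y : M := h⁻¹ x with hy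
  have hyV : y ∈ V := by
    by_cases hyx : y = x
    · exact hyx ▸ hxV
    · exact hhsupp (subset_closure (show h y ≠ y by
        simp only [hy, show h (h⁻¹ x) = x from Equiv.apply_symm_apply h x]
        exact fun hh => hyx hh.symm))
  have hyx : y ≠ x := by
    intro hh
    have := congrArg h hh
    rw [hy, show h (h⁻¹ x) = x from Equiv.apply_symm_apply h x] at this
    exact hhx this.symm
  have hfy : f⁻¹ y ∉ V := fun hc => hmove _ hc (by simpa using hyV)
  have : ⁅f, h⁆ x = y := by
    simp only [commutatorElement_def, Equiv.Perm.mul_apply]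
    rw [← hy, hmovedh _ hfy, show f (f⁻¹ y) = y from Equiv.apply_symm_apply f y]
  rw [this]; exact hyx
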